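/- For 1 ≤ z ≤ h-1 ≤ n-1, R_n(h,z+1) - R_n(h,z) = q_n(h-z-1, h) = f(h-z-1, h-1)·f(n-h, n-h+z+1)/Cat(n), where R_n and q_n are as defined from uniform paths in Cat(n). -/

import Mathlib

open Finset

/-- Number of steps equal to `v` among the first `i` steps of `f`
(`false` = right-step, `true` = up-step). -/
def pref {m : ℕ} (f : Fin m → Bool) (i : ℕ) (v : Bool) : ℕ :=
  (univ.filter (fun j : Fin m => (j : ℕ) < i ∧ f j = v)).card

/-- `f` encodes a lattice path from `(0,0)` to `(a,b)` (with `false` = right-step,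
`true` = up-step) that stays weakly above the diagonal `y = x`. -/
def IsPath (a b : ℕ) (f : Fin (a + b) → Bool) : Prop :=
  pref f (a + b) false = a ∧ ∀ i ≤ a + b, pref f i false ≤ pref f i true

instance (a b : ℕ) : DecidablePred (IsPath a b) := fun f => by
  unfold IsPath; exact inferInstance

/-- The number of lattice paths from `(0,0)` to `(a,b)` staying weakly above `y = x`. -/
def pathCount (a b : ℕ) : ℕ := (univ.filter (IsPath a b)).card
/-- The x-coordinate of the unique up-step of the path `f` from height `h-1` to height `h`:
the number of right-steps taken before the `h`-th up-step. -/
def upX (n h : ℕ) (f : Fin (n + n) → Bool) : ℕ :=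
  (univ.filter (fun i : Fin (n + n) => f i = false ∧ pref f (i : ℕ) true < h)).card

/-- `R_n(h,z)`: the probability that a uniform path in `Cat(n)` has its up-step from
height `h-1` to height `h` at x-coordinate `≥ h - z`. -/
noncomputable def Rpath (n h z : ℕ) : ℝ :=
  ((univ.filter (fun f : Fin (n + n) → Bool =>
      IsPath n n f ∧ h - z ≤ upX n h f)).card : ℝ) / (pathCount n n)
/-- The ballot number `f(a,b) = C(a+b,a) - C(a+b,a-1)`, with the convention
`C(m,-1) = 0` (case `a = 0`). -/
def ballotZ (a b : ℕ) : ℤ :=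
  (a + b).choose a - (if a = 0 then 0 else (a + b).choose (a - 1))

/-- The ballot number `f(a,b) = C(a+b,a) - C(a+b,a-1)` as a natural number,
with the convention `C(m,-1) = 0` (case `a = 0`). -/
def ballotN (a b : ℕ) : ℕ :=
  (a + b).choose a - (if a = 0 then 0 else (a + b).choose (a - 1))

/-- The Catalan number `Cat(n) = C(2n,n)/(n+1)`. -/
def CatN (n : ℕ) : ℕ := (2 * n).choose n / (n + 1)

/-- `q_n(a,b)`: the probability that a uniform path in `Cat(n)` passes through both
`(a,b-1)` and `(a,b)`, i.e. contains the up-step from `(a,b-1)` to `(a,b)`. -/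
noncomputable def qprob (n a b : ℕ) : ℝ :=
  ((univ.filter (fun f : Fin (n + n) → Bool => IsPath n n f ∧
      pref f (a + b - 1) false = a ∧ pref f (a + b) false = a)).card : ℝ) /
    (pathCount n n : ℝ)


lemma pref_eq_sum {m : ℕ} (f : Fin m → Bool) (i : ℕ) (v : Bool) :
    pref f i v = ∑ j : Fin m, if ((j : ℕ) < i ∧ f j = v) then 1 else 0 := by
  rw [pref, Finset.card_filter]

lemma pref_zero {m : ℕ} (f : Fin m → Bool) (v : Bool) : pref f 0 v = 0 := by
  simp [pref]

lemma pref_succ {m : ℕ} (f : Fin m → Bool) (i : ℕ) (hi : i < m) (v : Bool) :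
    pref f (i+1) v = pref f i v + (if f ⟨i, hi⟩ = v then 1 else 0) := by
  rw [pref_eq_sum, pref_eq_sum]
  have : (if f ⟨i, hi⟩ = v then 1 else 0) =
      ∑ j : Fin m, if ((j : ℕ) = i ∧ f j = v) then 1 else 0 := by
    rw [Finset.sum_congr rfl (g := fun j => if j = ⟨i, hi⟩ then (if f j = v then 1 else 0) else 0)]
    · rw [Finset.sum_ite_eq' Finset.univ ⟨i, hi⟩ (fun j => if f j = v then (1:ℕ) else 0)]
      simp
    · intro j _
      by_cases h2 : (j:ℕ) = i <;> by_cases h3 : f j = v <;>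
        simp [h2, h3, Fin.ext_iff]
  rw [this, ← Finset.sum_add_distrib]
  apply Finset.sum_congr rfl
  intro j _
  by_cases h1 : (j : ℕ) < i <;> by_cases h2 : (j : ℕ) = i <;> by_cases h3 : f j = v <;>
    simp [h1, h2, h3] <;> omega

lemma pref_mono {m : ℕ} (f : Fin m → Bool) {i i' : ℕ} (h : i ≤ i') (v : Bool) :
    pref f i v ≤ pref f i' v := by
  apply Finset.card_le_card
  intro j hj
  simp only [Finset.mem_filter] at *
  exact ⟨hj.1, lt_of_lt_of_le hj.2.1 h, hj.2.2⟩

lemma pref_stable {m : ℕ} (f : Fin m → Bool) {i : ℕ} (h : m ≤ i) (v : Bool) :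
    pref f i v = pref f m v := by
  unfold pref
  congr 1
  apply Finset.filter_congr
  intro j _
  have := j.isLt
  constructor
  · rintro ⟨_, h2⟩; exact ⟨this, h2⟩
  · rintro ⟨_, h2⟩; exact ⟨lt_of_lt_of_le this h, h2⟩

lemma pref_total {m : ℕ} (f : Fin m → Bool) {i : ℕ} (h : i ≤ m) :
    pref f i false + pref f i true = i := by
  induction i with
  | zero => simp [pref_zero]
  | succ k ih =>
    have hk : k < m := h
    rw [pref_succ f k hk, pref_succ f k hk]
    have := ih (le_of_lt hk)
    cases hf : f ⟨k, hk⟩ <;> simp [hf] <;> omega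

lemma pref_snoc_le {k : ℕ} (g : Fin k → Bool) (v w : Bool) {i : ℕ} (hi : i ≤ k) :
    pref (Fin.snoc g v) i w = pref g i w := by
  rw [pref_eq_sum, pref_eq_sum, Fin.sum_univ_castSucc]
  simp only [Fin.snoc_castSucc, Fin.snoc_last, Fin.coe_castSucc, Fin.val_last]
  have : ¬ (k < i) := by omega
  simp [this]

lemma pref_snoc_full {k : ℕ} (g : Fin k → Bool) (v w : Bool) :
    pref (Fin.snoc g v) (k+1) w = pref g k w + (if v = w then 1 else 0) := by
  rw [pref_eq_sum, pref_eq_sum, Fin.sum_univ_castSucc]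
  simp only [Fin.snoc_castSucc, Fin.snoc_last, Fin.coe_castSucc, Fin.val_last]
  congr 1
  · apply Finset.sum_congr rfl; intro j _
    have : (j:ℕ) < k + 1 ↔ (j:ℕ) < k := by constructor <;> intro <;> [skip; omega]; exact j.isLt
    simp [this]
  · simp

lemma pref_append_le {k l : ℕ} (g1 : Fin k → Bool) (g2 : Fin l → Bool) (w : Bool) {i : ℕ}
    (hi : i ≤ k) : pref (Fin.append g1 g2) i w = pref g1 i w := by
  rw [pref_eq_sum, pref_eq_sum, Fin.sum_univ_add]
  simp only [Fin.append_left, Fin.append_right, Fin.coe_castAdd, Fin.coe_natAdd]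
  have : ∀ j : Fin l, ¬ (k + (j:ℕ) < i) := by intro j; omega
  simp [this]

lemma pref_append_add {k l : ℕ} (g1 : Fin k → Bool) (g2 : Fin l → Bool) (w : Bool) (i : ℕ) :
    pref (Fin.append g1 g2) (k + i) w = pref g1 k w + pref g2 i w := by
  rw [pref_eq_sum, pref_eq_sum, pref_eq_sum, Fin.sum_univ_add]
  simp only [Fin.append_left, Fin.append_right, Fin.coe_castAdd, Fin.coe_natAdd]
  congr 1
  · apply Finset.sum_congr rfl; intro j _
    have h2 : (j:ℕ) < k + i := by have := j.isLt; omega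
    simp [h2]
  · apply Finset.sum_congr rfl; intro j _
    have : k + (j:ℕ) < k + i ↔ (j:ℕ) < i := by omega
    simp [this]

/-- Generalized path predicate: `a` right-steps among `m`, prefix falses ≤ d + trues. -/
def PathPred (d a : ℕ) {m : ℕ} (f : Fin m → Bool) : Prop :=
  pref f m false = a ∧ ∀ i ≤ m, pref f i false ≤ d + pref f i true

instance (d a m : ℕ) : DecidablePred (fun f : Fin m → Bool => PathPred d a f) := fun f => by
  unfold PathPred; exact inferInstance

def Npath (d a m : ℕ) : ℕ := (univ.filter (fun f : Fin m → Bool => PathPred d a f)).card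

lemma pref_init {k : ℕ} (f : Fin (k+1) → Bool) {i : ℕ} (hi : i ≤ k) (v : Bool) :
    pref (Fin.init f) i v = pref f i v := by
  conv_rhs => rw [← Fin.snoc_init_self f]
  rw [pref_snoc_le _ _ _ hi]

lemma pref_last_step {k : ℕ} (f : Fin (k+1) → Bool) (v : Bool) :
    pref f (k+1) v = pref f k v + (if f (Fin.last k) = v then 1 else 0) :=
  pref_succ f k (Nat.lt_succ_self k) v

lemma Npath_zero (d a : ℕ) : Npath d a 0 = if a = 0 then 1 else 0 := by
  unfold Npath
  split_ifs with ha
  · subst ha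
    rw [Finset.card_eq_one]
    refine ⟨(fun i => i.elim0), ?_⟩
    ext f
    simp only [Finset.mem_filter, Finset.mem_univ, true_and, Finset.mem_singleton]
    constructor
    · intro _; funext i; exact i.elim0
    · rintro rfl
      refine ⟨?_, ?_⟩
      · simp [pref]
      · intro i hi
        simp at hi
        subst hi
        simp [pref_zero]
  · rw [Finset.card_eq_zero]
    ext f
    simp only [Finset.mem_filter, Finset.mem_univ, true_and, Finset.notMem_empty, iff_false]
    intro hf
    apply ha
    have := hf.1
    simp [pref] at this
    omega

lemma pathPred_total {d a m : ℕ} {f : Fin m → Bool} (hf : PathPred d a f) :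
    pref f m true = m - a := by
  have h1 := hf.1
  have := pref_total f (le_refl m)
  omega

lemma cardB (d a k : ℕ) :
    (univ.filter (fun f : Fin (k+1) → Bool => PathPred d a f ∧ f (Fin.last k) = true)).card
      = Npath d a k := by
  apply Finset.card_nbij' (fun f => Fin.init f) (fun g => Fin.snoc g true)
  · -- maps into
    intro f hf
    simp only [Finset.mem_coe, Finset.mem_filter, Finset.mem_univ, true_and] at hf ⊢
    obtain ⟨⟨h1, h2⟩, h3⟩ := hf
    constructor
    · rw [pref_init f (le_refl k)]
      rw [pref_last_step] at h1
      simp [h3] at h1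
      omega
    · intro i hi
      rw [pref_init f hi, pref_init f hi]
      exact h2 i (by omega)
  · -- reverse maps into
    intro g hg
    simp only [Finset.mem_coe, Finset.mem_filter, Finset.mem_univ, true_and] at hg ⊢
    obtain ⟨h1, h2⟩ := hg
    refine ⟨⟨?_, ?_⟩, by simp⟩
    · rw [pref_last_step, Fin.snoc_last, pref_snoc_le _ _ _ (le_refl k)]
      simp [h1]
    · intro i hi
      rcases Nat.lt_or_ge i (k+1) with h | h
      · rw [pref_snoc_le _ _ _ (by omega), pref_snoc_le _ _ _ (by omega)]
        exact h2 i (by omega)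
      · have hik : i = k + 1 := by omega
        subst hik
        rw [pref_snoc_full, pref_snoc_full]
        have := h2 k (le_refl k)
        simp
        omega
  · intro f hf
    simp only [Finset.mem_coe, Finset.mem_filter] at hf
    rw [← hf.2.2]
    exact Fin.snoc_init_self f
  · intro g _; exact Fin.init_snoc _ _

lemma cardA (d a k : ℕ) :
    (univ.filter (fun f : Fin (k+1) → Bool => PathPred d a f ∧ f (Fin.last k) = false)).card
      = if 1 ≤ a ∧ 2*a ≤ d + k + 1 then Npath d (a-1) k else 0 := by
  split_ifs with hc
  · apply Finset.card_nbij' (fun f => Fin.init f) (fun g => Fin.snoc g false)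
    · intro f hf
      simp only [Finset.mem_coe, Finset.mem_filter, Finset.mem_univ, true_and] at hf ⊢
      obtain ⟨⟨h1, h2⟩, h3⟩ := hf
      constructor
      · rw [pref_init f (le_refl k)]
        rw [pref_last_step] at h1
        simp [h3] at h1
        omega
      · intro i hi
        rw [pref_init f hi, pref_init f hi]
        exact h2 i (by omega)
    · intro g hg
      simp only [Finset.mem_coe, Finset.mem_filter, Finset.mem_univ, true_and] at hg ⊢
      obtain ⟨h1, h2⟩ := hg
      have htot := pref_total g (le_refl k)
      refine ⟨⟨?_, ?_⟩, by simp⟩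
      · rw [pref_last_step, Fin.snoc_last, pref_snoc_le _ _ _ (le_refl k)]
        simp [h1]
        omega
      · intro i hi
        rcases Nat.lt_or_ge i (k+1) with h | h
        · rw [pref_snoc_le _ _ _ (by omega), pref_snoc_le _ _ _ (by omega)]
          exact h2 i (by omega)
        · have hik : i = k + 1 := by omega
          subst hik
          rw [pref_snoc_full, pref_snoc_full]
          simp
          omega
    · intro f hf
      simp only [Finset.mem_coe, Finset.mem_filter] at hf
      rw [← hf.2.2]
      exact Fin.snoc_init_self f
    · intro g _; exact Fin.init_snoc _ _
  · rw [Finset.card_eq_zero, Finset.eq_empty_iff_forall_notMem]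
    intro f hf
    simp only [Finset.mem_filter, Finset.mem_univ, true_and] at hf
    obtain ⟨⟨h1, h2⟩, h3⟩ := hf
    apply hc
    have h4 := pref_last_step f false
    simp [h3] at h4
    have h5 := h2 (k+1) (le_refl _)
    have h6 := pref_total f (le_refl (k+1))
    omega

lemma Npath_succ (d a k : ℕ) :
    Npath d a (k+1) = (if 1 ≤ a ∧ 2*a ≤ d + k + 1 then Npath d (a-1) k else 0)
      + Npath d a k := by
  rw [← cardA d a k, ← cardB d a k, Npath]
  rw [← Finset.filter_filter, ← Finset.filter_filter]
  have hneg : ∀ f : Fin (k+1) → Bool, (f (Fin.last k) = true) ↔ ¬ (f (Fin.last k) = false) := by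
    intro f; cases f (Fin.last k) <;> simp
  rw [Finset.filter_congr (fun f _ => hneg f)]
  exact (Finset.card_filter_add_card_filter_not
    (fun f : Fin (k+1) → Bool => f (Fin.last k) = false)).symm

/-- Closed form for `Npath`. -/
def Fz (d a m : ℕ) : ℤ :=
  if 2*a ≤ d + m then
    ((m.choose a : ℤ) - (if a ≤ d then 0 else (m.choose (a - d - 1) : ℤ)))
  else 0

lemma Fz_succ (d a k : ℕ) :
    Fz d a (k+1) = (if 1 ≤ a ∧ 2*a ≤ d + k + 1 then Fz d (a-1) k else 0) + Fz d a k := by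
  unfold Fz
  by_cases h1 : 2*a ≤ d + k + 1
  case neg =>
    simp only [if_neg (show ¬ 2*a ≤ d+(k+1) by omega), if_neg (show ¬ 2*a ≤ d+k by omega),
      if_neg (show ¬ (1 ≤ a ∧ 2*a ≤ d+k+1) by omega)]
    ring
  case pos =>
  simp only [if_pos (show 2*a ≤ d+(k+1) by omega)]
  by_cases ha : 1 ≤ a
  case neg =>
    have ha0 : a = 0 := by omega
    subst ha0
    simp only [if_neg (show ¬ (1 ≤ 0 ∧ 2*0 ≤ d+k+1) by omega),
      if_pos (show 2*0 ≤ d+k by omega), if_pos (show 0 ≤ d by omega)]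
    simp [Nat.choose]
  case pos =>
  simp only [if_pos (show 1 ≤ a ∧ 2*a ≤ d+k+1 from ⟨ha, h1⟩),
    if_pos (show 2*(a-1) ≤ d+k by omega)]
  have hpas : ((k+1).choose a : ℤ) = k.choose (a-1) + k.choose a := by
    have h := Nat.choose_succ_succ k (a-1)
    simp only [Nat.succ_eq_add_one] at h
    rw [show a-1+1 = a by omega] at h
    exact_mod_cast h
  by_cases hd : a ≤ d
  case pos =>
    simp only [if_pos hd, if_pos (show a-1 ≤ d by omega)]
    by_cases h3 : 2*a ≤ d+k
    · simp only [if_pos h3]; rw [hpas]; ring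
    · simp only [if_neg h3]
      rw [hpas, Nat.choose_eq_zero_of_lt (show k < a by omega)]
      push_cast; ring
  case neg =>
  simp only [if_neg hd]
  by_cases hd2 : a = d + 1
  case pos =>
    simp only [if_pos (show a - 1 ≤ d by omega), show a - d - 1 = 0 by omega,
      Nat.choose_zero_right]
    by_cases h3 : 2*a ≤ d+k
    · simp only [if_pos h3]
      rw [hpas]; push_cast; ring
    · simp only [if_neg h3]
      rw [hpas, show a = k by omega, Nat.choose_self]
      push_cast; ring
  case neg =>
  simp only [if_neg (show ¬ a - 1 ≤ d by omega), show a-1-d-1 = a-d-2 by omega]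
  have e : ((k+1).choose (a-d-1) : ℤ) = k.choose (a-d-2) + k.choose (a-d-1) := by
    have h := Nat.choose_succ_succ k (a-d-2)
    simp only [Nat.succ_eq_add_one] at h
    rw [show a-d-2+1 = a-d-1 by omega] at h
    exact_mod_cast h
  by_cases h3 : 2*a ≤ d+k
  · simp only [if_pos h3]
    rw [hpas, e]; ring
  · simp only [if_neg h3]
    have hsym : (k.choose (a-d-1) : ℤ) = k.choose a := by
      rw [show a-d-1 = k-a by omega, Nat.choose_symm (show a ≤ k by omega)]
    rw [hpas, e, hsym]; ring

lemma Npath_eq_Fz (d a m : ℕ) : (Npath d a m : ℤ) = Fz d a m := by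
  induction m generalizing a with
  | zero =>
    rw [Npath_zero]
    unfold Fz
    by_cases ha : a = 0
    · subst ha; simp
    · simp only [if_neg ha]
      by_cases h2 : 2*a ≤ d + 0
      · rw [if_pos h2, Nat.choose_eq_zero_of_lt (by omega), if_pos (by omega : a ≤ d)]
        simp
      · rw [if_neg h2]; simp
  | succ k ih =>
    rw [Npath_succ, Fz_succ]
    push_cast
    rw [← ih (a-1), ← ih a]

lemma pref_restrict {m m' : ℕ} (hm : m' ≤ m) (f : Fin m → Bool) {i : ℕ} (hi : i ≤ m') (v : Bool) :
    pref (fun j : Fin m' => f ⟨j, lt_of_lt_of_le j.isLt hm⟩) i v = pref f i v := by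
  induction i with
  | zero => rw [pref_zero, pref_zero]
  | succ t ih =>
    rw [pref_succ _ t (show t < m' by omega), pref_succ f t (by omega), ih (by omega)]

lemma pref_offset {m m2 : ℕ} (c : ℕ) (hc : c + m2 ≤ m) (f : Fin m → Bool) {i : ℕ}
    (hi : i ≤ m2) (v : Bool) :
    pref f (c + i) v = pref f c v + pref (fun j : Fin m2 => f ⟨c + j, by omega⟩) i v := by
  induction i with
  | zero => rw [pref_zero, add_zero, add_zero]
  | succ t ih =>
    rw [show c + (t+1) = (c+t)+1 by omega, pref_succ f (c+t) (by omega),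
      pref_succ _ t (show t < m2 by omega), ih (by omega), add_assoc]

lemma pref_comp_cast {m m' : ℕ} (hm : m' = m) (f : Fin m → Bool) (i : ℕ) (v : Bool) :
    pref (fun j : Fin m' => f (Fin.cast hm j)) i v = pref f i v := by
  subst hm; rfl

lemma upX_of_pref (n h : ℕ) (hh : 1 ≤ h) (f : Fin (n+n) → Bool) (hf : IsPath n n f)
    (a : ℕ) (hah : a + h ≤ n + n)
    (h1 : pref f (a+h-1) false = a) (h2 : pref f (a+h) false = a) :
    upX n h f = a := by
  have hk1 : a + h - 1 < n + n := by omega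
  have hstep := pref_succ f (a+h-1) hk1 false
  rw [show a+h-1+1 = a+h by omega, h1, h2] at hstep
  have htrue : f ⟨a+h-1, hk1⟩ = true := by
    rcases Bool.eq_false_or_eq_true (f ⟨a+h-1, hk1⟩) with hv | hv
    · exact hv
    · rw [hv] at hstep; simp at hstep
  have htk : pref f (a+h-1) true = h - 1 := by
    have := pref_total f (le_of_lt hk1)
    omega
  have htk1 : pref f (a+h) true = h := by
    have hstep2 := pref_succ f (a+h-1) hk1 true
    rw [show a+h-1+1 = a+h by omega, htk, htrue] at hstep2
    simp at hstep2
    omega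
  unfold upX
  rw [show a = pref f (a+h-1) false from h1.symm, pref]
  congr 1
  apply Finset.filter_congr
  intro i _
  constructor
  · rintro ⟨hfi, hpi⟩
    refine ⟨?_, hfi⟩
    by_contra hge
    push_neg at hge
    rcases Nat.eq_or_lt_of_le hge with he | hlt
    · have : i = ⟨a+h-1, hk1⟩ := Fin.ext he.symm
      rw [this, htrue] at hfi; exact Bool.noConfusion hfi
    · have : h ≤ pref f i true := htk1 ▸ pref_mono f (show a+h ≤ (i:ℕ) by omega) true
      omega
  · rintro ⟨hlt, hfi⟩
    refine ⟨hfi, ?_⟩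
    have : pref f i true ≤ h - 1 := htk ▸ pref_mono f (le_of_lt hlt) true
    omega

lemma exists_pref_upX (n h : ℕ) (hh : 1 ≤ h) (hn : h ≤ n) (f : Fin (n+n) → Bool)
    (hf : IsPath n n f) :
    ∃ a, a + h ≤ n + n ∧ pref f (a+h-1) false = a ∧ pref f (a+h) false = a ∧ upX n h f = a := by
  have htot : pref f (n+n) true = n := by
    have h1 := hf.1
    have := pref_total f (le_refl (n+n))
    omega
  have hex : ∃ t, h ≤ pref f t true := ⟨n+n, by omega⟩
  classical
  set T := Nat.find hex with hTdef
  have hT : h ≤ pref f T true := Nat.find_spec hex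
  have hTle : T ≤ n + n := Nat.find_le (by omega)
  have hT1 : 1 ≤ T := by
    rcases Nat.eq_zero_or_pos T with h0 | h1'
    · rw [h0, pref_zero] at hT; omega
    · exact h1'
  have hTpred : ¬ h ≤ pref f (T-1) true := Nat.find_min hex (by omega)
  have hTnn : T - 1 < n + n := by omega
  have hstep := pref_succ f (T-1) hTnn true
  rw [show T-1+1 = T by omega] at hstep
  have htrue : f ⟨T-1, hTnn⟩ = true := by
    rcases Bool.eq_false_or_eq_true (f ⟨T-1, hTnn⟩) with hv | hv
    · exact hv
    · rw [hv] at hstep; simp at hstep; omega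
  rw [htrue] at hstep
  simp at hstep
  have hTt : pref f T true = h := by omega
  have hTt1 : pref f (T-1) true = h - 1 := by omega
  have hhT : h ≤ T := by
    have := pref_total f (le_of_lt hTnn)
    omega
  have hfalse1 : pref f (T-1) false = T - h := by
    have := pref_total f (le_of_lt hTnn)
    omega
  have hfalse2 : pref f T false = T - h := by
    have := pref_total f hTle
    omega
  refine ⟨T - h, by omega, ?_, ?_, ?_⟩
  · rw [show T - h + h - 1 = T - 1 by omega]; exact hfalse1
  · rw [show T - h + h = T by omega]; exact hfalse2
  · exact upX_of_pref n h hh f hf (T-h) (by omega)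
      (by rw [show T - h + h - 1 = T - 1 by omega]; exact hfalse1)
      (by rw [show T - h + h = T by omega]; exact hfalse2)

lemma upX_iff (n h : ℕ) (hh : 1 ≤ h) (hn : h ≤ n) (f : Fin (n+n) → Bool)
    (hf : IsPath n n f) (a : ℕ) (hah : a + h ≤ n + n) :
    upX n h f = a ↔ (pref f (a+h-1) false = a ∧ pref f (a+h) false = a) := by
  constructor
  · intro hu
    obtain ⟨a', _, c1, c2, hu'⟩ := exists_pref_upX n h hh hn f hf
    have : a = a' := by omega
    subst this
    exact ⟨c1, c2⟩
  · rintro ⟨c1, c2⟩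
    exact upX_of_pref n h hh f hf a hah c1 c2

lemma isPath_iff_pathPred (a b : ℕ) (f : Fin (a+b) → Bool) :
    IsPath a b f ↔ PathPred 0 a f := by
  unfold IsPath PathPred
  simp

lemma pathCount_eq_Npath (a b : ℕ) : pathCount a b = Npath 0 a (a+b) := by
  unfold pathCount Npath
  congr 1
  apply Finset.filter_congr
  intro f _
  exact isPath_iff_pathPred a b f

lemma pathCount_int (a b : ℕ) (hab : a ≤ b) :
    (pathCount a b : ℤ) = ((a+b).choose a : ℤ)
      - (if a = 0 then 0 else ((a+b).choose (a-1) : ℤ)) := by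
  rw [pathCount_eq_Npath, Npath_eq_Fz]
  unfold Fz
  rw [if_pos (by omega : 2*a ≤ 0 + (a+b))]
  by_cases ha : a = 0
  · rw [if_pos ha, if_pos (by omega : a ≤ 0)]
  · rw [if_neg ha, if_neg (by omega : ¬ a ≤ 0), show a - 0 - 1 = a - 1 by omega]

lemma pathCount_eq_ballotN (a b : ℕ) (hab : a ≤ b) : pathCount a b = ballotN a b := by
  have h := pathCount_int a b hab
  unfold ballotN
  by_cases ha : a = 0
  · rw [if_pos ha] at h ⊢
    omega
  · rw [if_neg ha] at h ⊢
    omega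

lemma choose_id (n : ℕ) (hn : 1 ≤ n) :
    (2*n).choose n * n = (2*n).choose (n-1) * (n+1) := by
  have h := Nat.choose_succ_right_eq (2*n) (n-1)
  rw [show n-1+1 = n by omega, show 2*n - (n-1) = n+1 by omega] at h
  exact h

lemma pathCount_mul (n : ℕ) : (n+1) * pathCount n n = (2*n).choose n := by
  by_cases hn : n = 0
  · subst hn
    have : pathCount 0 0 = 1 := by
      have h := pathCount_int 0 0 (le_refl 0)
      simp at h
      omega
    rw [this]; simp
  · have h := pathCount_int n n (le_refl n)
    rw [if_neg hn] at h
    have hid := choose_id n (by omega)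
    have h2n : n + n = 2 * n := by omega
    rw [h2n] at h
    have : ((n:ℤ)+1) * pathCount n n = (2*n).choose n := by
      rw [h]
      have hz : ((2*n).choose n : ℤ) * n = ((2*n).choose (n-1) : ℤ) * (n+1) := by
        exact_mod_cast hid
      linear_combination hz
    exact_mod_cast this

lemma pathCount_eq_CatN (n : ℕ) : pathCount n n = CatN n := by
  unfold CatN
  rw [← pathCount_mul n, Nat.mul_div_cancel_left _ (by omega : 0 < n+1)]

lemma append_snoc_val {k1 m2 nn : ℕ} (hm : k1 + 1 + m2 = nn) (g1 : Fin k1 → Bool) (v : Bool)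
    (g2 : Fin m2 → Bool) (i : Fin nn) :
    Fin.append (Fin.snoc g1 v) g2 (Fin.cast hm.symm i) =
      if h : (i:ℕ) < k1 then g1 ⟨i, h⟩
      else if h2 : (i:ℕ) = k1 then v
      else g2 ⟨(i:ℕ) - (k1+1), by omega⟩ := by
  have hi := i.isLt
  rcases Nat.lt_or_ge (i : ℕ) (k1+1) with hlt | hge
  · have hcast : Fin.cast hm.symm i = Fin.castAdd m2 ⟨(i:ℕ), hlt⟩ := Fin.ext rfl
    rw [hcast, Fin.append_left]
    rcases Nat.lt_or_ge (i : ℕ) k1 with h1 | h1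
    · have : (⟨(i:ℕ), hlt⟩ : Fin (k1+1)) = Fin.castSucc ⟨(i:ℕ), h1⟩ := Fin.ext rfl
      rw [this, Fin.snoc_castSucc, dif_pos h1]
    · have hik : (i:ℕ) = k1 := by omega
      have : (⟨(i:ℕ), hlt⟩ : Fin (k1+1)) = Fin.last k1 := Fin.ext hik
      rw [this, Fin.snoc_last, dif_neg (by omega), dif_pos hik]
  · have hcast : Fin.cast hm.symm i = Fin.natAdd (k1+1) ⟨(i:ℕ) - (k1+1), by omega⟩ :=
      Fin.ext (by simp; omega)
    rw [hcast, Fin.append_right, dif_neg (by omega), dif_neg (by omega)]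

lemma qcard (n h a : ℕ) (hh : 1 ≤ h) (hn : h ≤ n) (ha : a + 1 ≤ h) :
    (univ.filter (fun f : Fin (n+n) → Bool => IsPath n n f ∧
      pref f (a + h - 1) false = a ∧ pref f (a + h) false = a)).card
    = Npath 0 a (a+h-1) * Npath (h-a) (n-a) (n+n-(a+h)) := by
  classical
  set k1 := a + h - 1 with hk1def
  set m2 := n + n - (a + h) with hm2def
  have hk1n : k1 + 1 = a + h := by omega
  have hm : k1 + 1 + m2 = n + n := by omega
  have hprod : Npath 0 a k1 * Npath (h-a) (n-a) m2
      = (univ.filter (fun p : (Fin k1 → Bool) × (Fin m2 → Bool) =>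
          PathPred 0 a p.1 ∧ PathPred (h-a) (n-a) p.2)).card := by
    rw [Npath, Npath, ← Finset.card_product]
    congr 1
    rw [← Finset.univ_product_univ, Finset.filter_product]
  rw [hprod]
  apply Finset.card_nbij'
    (i := fun f => (fun j : Fin k1 => f ⟨j, by omega⟩, fun j : Fin m2 => f ⟨k1+1+(j:ℕ), by omega⟩))
    (j := fun p => fun i : Fin (n+n) => Fin.append (Fin.snoc p.1 true) p.2 (Fin.cast hm.symm i))
  · -- forward membership
    intro f hf
    simp only [Finset.mem_coe, Finset.mem_filter, Finset.mem_univ, true_and] at hf ⊢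
    obtain ⟨⟨ht, hcond⟩, hp1, hp2⟩ := hf
    have hp1' : pref f k1 false = a := hp1
    have hp2' : pref f (k1+1) false = a := by rw [hk1n]; exact hp2
    have hres : ∀ i ≤ k1, ∀ v, pref (fun j : Fin k1 => f ⟨j, by omega⟩) i v = pref f i v := by
      intro i hi v
      exact pref_restrict (by omega) f hi v
    have hoff : ∀ i ≤ m2, ∀ v,
        pref f (k1+1+i) v = pref f (k1+1) v + pref (fun j : Fin m2 => f ⟨k1+1+(j:ℕ), by omega⟩) i v := by
      intro i hi v
      exact pref_offset (k1+1) (by omega) f hi v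
    have htrue : pref f (k1+1) true = h := by
      have := pref_total f (show k1+1 ≤ n+n by omega)
      omega
    constructor
    · constructor
      · rw [hres k1 (le_refl k1) false]; exact hp1'
      · intro i hi
        rw [hres i hi false, hres i hi true]
        have := hcond i (by omega)
        omega
    · constructor
      · have he : pref f (k1+1+m2) false = n := by
          rw [show k1+1+m2 = n+n from hm]; exact ht
        have := hoff m2 (le_refl m2) false
        omega
      · intro i hi
        have h1 := hoff i hi false
        have h2 := hoff i hi true
        have h3 := hcond (k1+1+i) (by omega)
        rw [hp2'] at h1
        rw [htrue] at h2
        omega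
  · -- backward membership
    intro p hp
    simp only [Finset.mem_coe, Finset.mem_filter, Finset.mem_univ, true_and] at hp ⊢
    obtain ⟨⟨ht1, hc1⟩, ht2, hc2⟩ := hp
    have hcast : ∀ i v, pref (fun i : Fin (n+n) =>
        Fin.append (Fin.snoc p.1 true) p.2 (Fin.cast hm.symm i)) i v
        = pref (Fin.append (Fin.snoc p.1 true) p.2) i v := by
      intro i v
      exact pref_comp_cast hm.symm _ i v
    have hA : ∀ i ≤ k1, ∀ v, pref (Fin.append (Fin.snoc p.1 true) p.2) i v = pref p.1 i v := by
      intro i hi v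
      rw [pref_append_le _ _ _ (by omega), pref_snoc_le _ _ _ hi]
    have hB : ∀ v, pref (Fin.append (Fin.snoc p.1 true) p.2) (k1+1) v
        = pref p.1 k1 v + (if true = v then 1 else 0) := by
      intro v
      rw [pref_append_le _ _ _ (le_refl (k1+1)), pref_snoc_full]
    have hg1t : pref p.1 k1 true = k1 - a := by
      have := pref_total p.1 (le_refl k1)
      omega
    have hC : ∀ i ≤ m2, ∀ v, pref (Fin.append (Fin.snoc p.1 true) p.2) (k1+1+i) v
        = pref (Fin.snoc p.1 true) (k1+1) v + pref p.2 i v := by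
      intro i hi v
      exact pref_append_add _ _ v i
    have hCf : ∀ i ≤ m2, pref (Fin.append (Fin.snoc p.1 true) p.2) (k1+1+i) false
        = a + pref p.2 i false := by
      intro i hi
      rw [hC i hi false, pref_snoc_full]
      simp [ht1]
    have hCt : ∀ i ≤ m2, pref (Fin.append (Fin.snoc p.1 true) p.2) (k1+1+i) true
        = h + pref p.2 i true := by
      intro i hi
      rw [hC i hi true, pref_snoc_full, hg1t]
      simp
      omega
    refine ⟨⟨?_, ?_⟩, ?_, ?_⟩
    · -- total
      have he : pref (Fin.append (Fin.snoc p.1 true) p.2) (k1+1+m2) false = a + pref p.2 m2 false :=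
        hCf m2 (le_refl m2)
      rw [hcast, show n+n = k1+1+m2 from hm.symm, he, ht2]
      omega
    · -- prefix condition
      intro i hi
      rw [hcast, hcast]
      rcases Nat.lt_or_ge i (k1+1) with hlt | hge
      · rw [hA i (by omega) false, hA i (by omega) true]
        have := hc1 i (by omega)
        omega
      · have hi' : i = k1+1 + (i - (k1+1)) := by omega
        rw [hi', hCf (i-(k1+1)) (by omega), hCt (i-(k1+1)) (by omega)]
        have := hc2 (i-(k1+1)) (by omega)
        omega
    · rw [hcast, hA k1 (le_refl k1) false, ht1]
    · rw [show a + h = k1+1 by omega, hcast, hB false, ht1]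
      simp
  · -- left inverse
    intro f hf
    simp only [Finset.mem_coe, Finset.mem_filter, Finset.mem_univ, true_and] at hf
    obtain ⟨⟨ht, hcond⟩, hp1, hp2⟩ := hf
    have hp1' : pref f k1 false = a := hp1
    have hp2' : pref f (k1+1) false = a := by rw [hk1n]; exact hp2
    have hk1lt : k1 < n + n := by omega
    have hstep := pref_succ f k1 hk1lt false
    rw [hp1', hp2'] at hstep
    have hftrue : f ⟨k1, hk1lt⟩ = true := by
      rcases Bool.eq_false_or_eq_true (f ⟨k1, hk1lt⟩) with hv | hv
      · exact hv
      · rw [hv] at hstep; simp at hstep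
    funext i
    beta_reduce
    rw [append_snoc_val hm]
    rcases Nat.lt_or_ge (i:ℕ) k1 with h1 | h1
    · rw [dif_pos h1]
    · rcases Nat.eq_or_lt_of_le h1 with h2 | h2
      · rw [dif_neg (by omega), dif_pos h2.symm]
        have : i = ⟨k1, hk1lt⟩ := Fin.ext h2.symm
        rw [this, hftrue]
      · rw [dif_neg (by omega), dif_neg (by omega)]
        exact congrArg f (Fin.ext (by simp only [Fin.val_mk]; omega))
  · -- right inverse
    intro p hp
    apply Prod.ext
    · funext j
      simp only
      rw [append_snoc_val hm]
      rw [dif_pos (show ((⟨(j:ℕ), by omega⟩ : Fin (n+n)) : ℕ) < k1 from j.isLt)]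
    · funext j
      simp only
      rw [append_snoc_val hm]
      have hj : ¬ ((⟨k1+1+(j:ℕ), by omega⟩ : Fin (n+n)) : ℕ) < k1 := by simp; omega
      rw [dif_neg hj, dif_neg (by simp; omega)]
      exact congrArg p.2 (Fin.ext (by simp only [Fin.val_mk]; omega))

lemma NA (h a : ℕ) (hh : 1 ≤ h) (ha : a+1 ≤ h) : Npath 0 a (a+h-1) = ballotN a (h-1) := by
  rw [show a+h-1 = a+(h-1) by omega, ← pathCount_eq_Npath,
    pathCount_eq_ballotN a (h-1) (by omega)]

lemma NB (n h a : ℕ) (hh : 1 ≤ h) (hn : h ≤ n) (ha : a + 1 ≤ h) :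
    Npath (h-a) (n-a) (n+n-(a+h)) = ballotN (n-h) (n-a) := by
  rcases Nat.eq_or_lt_of_le hn with heq | hlt
  · subst heq
    rw [show h+h-(a+h) = h-a by omega]
    have hz := Npath_eq_Fz (h-a) (h-a) (h-a)
    unfold Fz at hz
    rw [if_pos (by omega), if_pos (le_refl _), Nat.choose_self] at hz
    unfold ballotN
    rw [Nat.sub_self, if_pos rfl, Nat.zero_add, Nat.choose_zero_right]
    omega
  · have hz := Npath_eq_Fz (h-a) (n-a) (n+n-(a+h))
    unfold Fz at hz
    rw [if_pos (by omega), if_neg (by omega : ¬ n-a ≤ h-a),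
      show n-a-(h-a)-1 = n-h-1 by omega] at hz
    unfold ballotN
    rw [if_neg (by omega : ¬ n-h = 0), show (n-h)+(n-a) = n+n-(a+h) by omega]
    have hsym : (n+n-(a+h)).choose (n-h) = (n+n-(a+h)).choose (n-a) := by
      have hs := Nat.choose_symm (show n-h ≤ n+n-(a+h) by omega)
      rw [show n+n-(a+h)-(n-h) = n-a by omega] at hs
      exact hs.symm
    rw [hsym]
    omega

/-- For `1 ≤ z ≤ h-1 ≤ n-1`,
`R_n(h,z+1) - R_n(h,z) = q_n(h-z-1,h) = f(h-z-1,h-1)·f(n-h,n-h+z+1)/Cat(n)`. -/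
theorem stmt15 (n h z : ℕ) (hz : 1 ≤ z) (hzh : z ≤ h - 1) (hh : 1 ≤ h) (hhn : h ≤ n) :
    Rpath n h (z + 1) - Rpath n h z = qprob n (h - z - 1) h ∧
    qprob n (h - z - 1) h =
      ((ballotN (h - z - 1) (h - 1) * ballotN (n - h) (n - h + z + 1) : ℕ) : ℝ) /
        (CatN n : ℝ) := by
  set a := h - z - 1 with hadef
  have hz1 : z + 1 ≤ h := by omega
  have ha1 : a + 1 ≤ h := by omega
  have hn2 : 2 ≤ n := by omega
  have hah : a + h ≤ n + n := by omega
  constructor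
  · -- part 1
    unfold Rpath qprob
    have hclaim : (univ.filter (fun f : Fin (n + n) → Bool =>
        IsPath n n f ∧ h - (z+1) ≤ upX n h f)).card
        = (univ.filter (fun f : Fin (n + n) → Bool =>
            IsPath n n f ∧ h - z ≤ upX n h f)).card
          + (univ.filter (fun f : Fin (n + n) → Bool => IsPath n n f ∧
              pref f (a + h - 1) false = a ∧ pref f (a + h) false = a)).card := by
      rw [← Finset.card_union_of_disjoint]
      · congr 1
        ext f
        simp only [Finset.mem_union, Finset.mem_filter, Finset.mem_univ, true_and]
        by_cases hfp : IsPath n n f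
        · have hu := upX_iff n h hh hhn f hfp a hah
          simp only [hfp, true_and]
          rw [← hu]
          omega
        · simp [hfp]
      · rw [Finset.disjoint_left]
        intro f h2 h3
        simp only [Finset.mem_filter, Finset.mem_univ, true_and] at h2 h3
        have hu := upX_iff n h hh hhn f h2.1 a hah
        have := hu.mpr h3.2
        have := h2.2
        omega
    rw [hclaim]
    push_cast
    rw [add_div]
    ring
  · -- part 2
    unfold qprob
    rw [qcard n h a hh hhn ha1, pathCount_eq_CatN, NA h a hh ha1,
      show n - h + z + 1 = n - a by omega, ← NB n h a hh hhn ha1]
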